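/- Let T_1 and T_2 be finite trees, each with at least two vertices. Let u_1 be a leaf of T_1 whose unique neighbour v_1 is adjacent to at least one leaf of T_1 other than u_1, and let u_2 be a leaf of T_2 whose unique neighbour v_2 is adjacent to at least one leaf of T_2 other than u_2. Let T be the tree obtained from the disjoint union of T_1 and T_2 by adding the edge u_1u_2. Then γ_t(T) = γ_t(T_1) + γ_t(T_2) and Γ_t(T) = Γ_t(T_1)·Γ_t(T_2); moreover, a set D of vertices of T is a total dominating set of T if and only if D ∩ V(T_1) is a total dominating set of T_1 and D ∩ V(T_2) is a total dominating set of T_2. -/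
import Mathlib


/-- A set `D` of vertices is a total dominating set if every vertex has a neighbour in `D`. -/
def IsTotalDominatingSet {V : Type*} (G : SimpleGraph V) (D : Finset V) : Prop :=
  ∀ v : V, ∃ w ∈ D, G.Adj v w

/-- The total domination number: the minimum size of a total dominating set. -/
noncomputable def totalDominationNumber {V : Type*} [Fintype V] (G : SimpleGraph V) : ℕ :=
  sInf {n | ∃ D : Finset V, IsTotalDominatingSet G D ∧ D.card = n}

/-- The number of minimum total dominating sets. -/
noncomputable def numMinTotalDomSets {V : Type*} [Fintype V] (G : SimpleGraph V) : ℕ :=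
  Set.ncard {D : Finset V | IsTotalDominatingSet G D ∧ D.card = totalDominationNumber G}

/-- The tree obtained from the disjoint union of `T₁` and `T₂` by adding the edge
`u₁u₂` between the vertices `u₁` of `T₁` and `u₂` of `T₂`. -/
def joinAtLeaves {V₁ V₂ : Type*} (T₁ : SimpleGraph V₁) (T₂ : SimpleGraph V₂)
    (u₁ : V₁) (u₂ : V₂) : SimpleGraph (V₁ ⊕ V₂) :=
  SimpleGraph.fromRel (fun a b =>
    (∃ x y, T₁.Adj x y ∧ a = Sum.inl x ∧ b = Sum.inl y) ∨
    (∃ x y, T₂.Adj x y ∧ a = Sum.inr x ∧ b = Sum.inr y) ∨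
    (a = Sum.inl u₁ ∧ b = Sum.inr u₂))

section aux
variable {V₁ V₂ : Type*} {T₁ : SimpleGraph V₁} {T₂ : SimpleGraph V₂} {u₁ : V₁} {u₂ : V₂}

lemma join_adj_ll {x y : V₁} :
    (joinAtLeaves T₁ T₂ u₁ u₂).Adj (Sum.inl x) (Sum.inl y) ↔ T₁.Adj x y := by
  simp only [joinAtLeaves, SimpleGraph.fromRel_adj]
  constructor
  · rintro ⟨hne, h⟩
    rcases h with (⟨a,b,h,h1,h2⟩|⟨a,b,h,h1,h2⟩|⟨h1,h2⟩)|(⟨a,b,h,h1,h2⟩|⟨a,b,h,h1,h2⟩|⟨h1,h2⟩) <;>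
      simp_all [SimpleGraph.adj_comm]
  · intro h
    exact ⟨by simp [h.ne], Or.inl (Or.inl ⟨x, y, h, rfl, rfl⟩)⟩

lemma join_adj_rr {x y : V₂} :
    (joinAtLeaves T₁ T₂ u₁ u₂).Adj (Sum.inr x) (Sum.inr y) ↔ T₂.Adj x y := by
  simp only [joinAtLeaves, SimpleGraph.fromRel_adj]
  constructor
  · rintro ⟨hne, h⟩
    rcases h with (⟨a,b,h,h1,h2⟩|⟨a,b,h,h1,h2⟩|⟨h1,h2⟩)|(⟨a,b,h,h1,h2⟩|⟨a,b,h,h1,h2⟩|⟨h1,h2⟩) <;>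
      simp_all [SimpleGraph.adj_comm]
  · intro h
    exact ⟨by simp [h.ne], Or.inl (Or.inr (Or.inl ⟨x, y, h, rfl, rfl⟩))⟩

lemma join_adj_lr {x : V₁} {y : V₂} :
    (joinAtLeaves T₁ T₂ u₁ u₂).Adj (Sum.inl x) (Sum.inr y) ↔ x = u₁ ∧ y = u₂ := by
  simp only [joinAtLeaves, SimpleGraph.fromRel_adj]
  constructor
  · rintro ⟨hne, h⟩
    rcases h with (⟨a,b,h,h1,h2⟩|⟨a,b,h,h1,h2⟩|⟨h1,h2⟩)|(⟨a,b,h,h1,h2⟩|⟨a,b,h,h1,h2⟩|⟨h1,h2⟩) <;>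
      simp_all
  · rintro ⟨rfl, rfl⟩
    exact ⟨by simp, Or.inl (Or.inr (Or.inr ⟨rfl, rfl⟩))⟩

lemma join_adj_rl {x : V₂} {y : V₁} :
    (joinAtLeaves T₁ T₂ u₁ u₂).Adj (Sum.inr x) (Sum.inl y) ↔ y = u₁ ∧ x = u₂ := by
  rw [SimpleGraph.adj_comm, join_adj_lr]

end aux

lemma exists_adj_of_tree {V : Type*} [Fintype V] {T : SimpleGraph V} (hT : T.IsTree)
    (hcard : 2 ≤ Fintype.card V) (v : V) : ∃ w, T.Adj v w := by
  obtain ⟨w, hw⟩ := Fintype.exists_ne_of_one_lt_card (by omega) v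
  obtain ⟨p⟩ := hT.isConnected.preconnected v w
  cases p with
  | nil => exact absurd rfl hw.symm
  | cons h _ => exact ⟨_, h⟩


/-- If `u₁` is a leaf of the tree `T₁` whose unique neighbour `v₁` is adjacent to another
leaf of `T₁`, and similarly `u₂`, `v₂` in `T₂`, then the tree `T` obtained by joining `T₁`
and `T₂` by the edge `u₁u₂` satisfies `γₜ(T) = γₜ(T₁) + γₜ(T₂)`,
`Γₜ(T) = Γₜ(T₁)·Γₜ(T₂)`, and a set `D` is a total dominating set of `T` iff its traces on
`T₁` and `T₂` are total dominating sets. -/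
theorem joinAtLeaves_totalDomination {V₁ V₂ : Type*} [Fintype V₁] [Fintype V₂]
    [DecidableEq V₁] [DecidableEq V₂]
    (T₁ : SimpleGraph V₁) (T₂ : SimpleGraph V₂)
    (hT₁ : T₁.IsTree) (hT₂ : T₂.IsTree)
    (hcard₁ : 2 ≤ Fintype.card V₁) (hcard₂ : 2 ≤ Fintype.card V₂)
    (u₁ v₁ : V₁) (u₂ v₂ : V₂)
    (hu₁ : T₁.Adj u₁ v₁) (hu₁leaf : ∀ x, T₁.Adj u₁ x → x = v₁)
    (hv₁ : ∃ u', u' ≠ u₁ ∧ T₁.Adj v₁ u' ∧ ∀ x, T₁.Adj u' x → x = v₁)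
    (hu₂ : T₂.Adj u₂ v₂) (hu₂leaf : ∀ x, T₂.Adj u₂ x → x = v₂)
    (hv₂ : ∃ u', u' ≠ u₂ ∧ T₂.Adj v₂ u' ∧ ∀ x, T₂.Adj u' x → x = v₂) :
    totalDominationNumber (joinAtLeaves T₁ T₂ u₁ u₂)
        = totalDominationNumber T₁ + totalDominationNumber T₂ ∧
    numMinTotalDomSets (joinAtLeaves T₁ T₂ u₁ u₂)
        = numMinTotalDomSets T₁ * numMinTotalDomSets T₂ ∧
    ∀ D : Finset (V₁ ⊕ V₂),
      IsTotalDominatingSet (joinAtLeaves T₁ T₂ u₁ u₂) D ↔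
        (IsTotalDominatingSet T₁ D.toLeft ∧ IsTotalDominatingSet T₂ D.toRight) := by
  obtain ⟨u₁', hu₁'ne, hu₁'adj, hu₁'leaf⟩ := hv₁
  obtain ⟨u₂', hu₂'ne, hu₂'adj, hu₂'leaf⟩ := hv₂
  -- the key iff
  have key : ∀ D : Finset (V₁ ⊕ V₂),
      IsTotalDominatingSet (joinAtLeaves T₁ T₂ u₁ u₂) D ↔
        (IsTotalDominatingSet T₁ D.toLeft ∧ IsTotalDominatingSet T₂ D.toRight) := by
    intro D
    constructor
    · intro hD
      -- first: v₁ ∈ D (as inl) since u₁' is a leaf whose only neighbour is v₁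
      have hv₁D : Sum.inl v₁ ∈ D := by
        obtain ⟨w, hwD, hw⟩ := hD (Sum.inl u₁')
        cases w with
        | inl w =>
          rw [join_adj_ll] at hw
          rwa [hu₁'leaf w hw] at hwD
        | inr w =>
          rw [join_adj_lr] at hw
          exact absurd hw.1 hu₁'ne
      have hv₂D : Sum.inr v₂ ∈ D := by
        obtain ⟨w, hwD, hw⟩ := hD (Sum.inr u₂')
        cases w with
        | inl w =>
          rw [join_adj_rl] at hw
          exact absurd hw.2 hu₂'ne
        | inr w =>
          rw [join_adj_rr] at hw
          rwa [hu₂'leaf w hw] at hwD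
      constructor
      · intro v
        by_cases hv : v = u₁
        · exact ⟨v₁, Finset.mem_toLeft.2 hv₁D, hv ▸ hu₁⟩
        · obtain ⟨w, hwD, hw⟩ := hD (Sum.inl v)
          cases w with
          | inl w =>
            rw [join_adj_ll] at hw
            exact ⟨w, Finset.mem_toLeft.2 hwD, hw⟩
          | inr w =>
            rw [join_adj_lr] at hw
            exact absurd hw.1 hv
      · intro v
        by_cases hv : v = u₂
        · exact ⟨v₂, Finset.mem_toRight.2 hv₂D, hv ▸ hu₂⟩
        · obtain ⟨w, hwD, hw⟩ := hD (Sum.inr v)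
          cases w with
          | inl w =>
            rw [join_adj_rl] at hw
            exact absurd hw.2 hv
          | inr w =>
            rw [join_adj_rr] at hw
            exact ⟨w, Finset.mem_toRight.2 hwD, hw⟩
    · rintro ⟨h1, h2⟩ v
      cases v with
      | inl v =>
        obtain ⟨w, hw, hadj⟩ := h1 v
        exact ⟨Sum.inl w, Finset.mem_toLeft.1 hw, join_adj_ll.2 hadj⟩
      | inr v =>
        obtain ⟨w, hw, hadj⟩ := h2 v
        exact ⟨Sum.inr w, Finset.mem_toRight.1 hw, join_adj_rr.2 hadj⟩
  -- nonemptiness of the defining sets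
  have hne₁ : {n | ∃ D : Finset V₁, IsTotalDominatingSet T₁ D ∧ D.card = n}.Nonempty :=
    ⟨_, Finset.univ, fun v => by
      obtain ⟨w, hw⟩ := exists_adj_of_tree hT₁ hcard₁ v
      exact ⟨w, Finset.mem_univ w, hw⟩, rfl⟩
  have hne₂ : {n | ∃ D : Finset V₂, IsTotalDominatingSet T₂ D ∧ D.card = n}.Nonempty :=
    ⟨_, Finset.univ, fun v => by
      obtain ⟨w, hw⟩ := exists_adj_of_tree hT₂ hcard₂ v
      exact ⟨w, Finset.mem_univ w, hw⟩, rfl⟩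
  obtain ⟨D₁, hD₁, hD₁card⟩ : ∃ D : Finset V₁, IsTotalDominatingSet T₁ D ∧
      D.card = totalDominationNumber T₁ := Nat.sInf_mem hne₁
  obtain ⟨D₂, hD₂, hD₂card⟩ : ∃ D : Finset V₂, IsTotalDominatingSet T₂ D ∧
      D.card = totalDominationNumber T₂ := Nat.sInf_mem hne₂
  -- lower bounds
  have hlow₁ : ∀ D : Finset V₁, IsTotalDominatingSet T₁ D →
      totalDominationNumber T₁ ≤ D.card := fun D hD => Nat.sInf_le ⟨D, hD, rfl⟩
  have hlow₂ : ∀ D : Finset V₂, IsTotalDominatingSet T₂ D →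
      totalDominationNumber T₂ ≤ D.card := fun D hD => Nat.sInf_le ⟨D, hD, rfl⟩
  have hjoin : IsTotalDominatingSet (joinAtLeaves T₁ T₂ u₁ u₂) (D₁.disjSum D₂) := by
    rw [key]
    simp only [Finset.toLeft_disjSum, Finset.toRight_disjSum]
    exact ⟨hD₁, hD₂⟩
  have hγ : totalDominationNumber (joinAtLeaves T₁ T₂ u₁ u₂)
      = totalDominationNumber T₁ + totalDominationNumber T₂ := by
    apply le_antisymm
    · apply Nat.sInf_le
      exact ⟨D₁.disjSum D₂, hjoin, by rw [Finset.card_disjSum, hD₁card, hD₂card]⟩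
    · have hnej : {n | ∃ D : Finset (V₁ ⊕ V₂),
          IsTotalDominatingSet (joinAtLeaves T₁ T₂ u₁ u₂) D ∧ D.card = n}.Nonempty :=
        ⟨_, D₁.disjSum D₂, hjoin, rfl⟩
      apply le_csInf hnej
      rintro n ⟨D, hD, rfl⟩
      rw [key] at hD
      calc totalDominationNumber T₁ + totalDominationNumber T₂
          ≤ D.toLeft.card + D.toRight.card :=
            Nat.add_le_add (hlow₁ _ hD.1) (hlow₂ _ hD.2)
        _ = D.card := Finset.card_toLeft_add_card_toRight
  refine ⟨hγ, ?_, key⟩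
  -- counting
  have himg : {D : Finset (V₁ ⊕ V₂) | IsTotalDominatingSet (joinAtLeaves T₁ T₂ u₁ u₂) D ∧
      D.card = totalDominationNumber (joinAtLeaves T₁ T₂ u₁ u₂)}
      = (fun p : Finset V₁ × Finset V₂ => p.1.disjSum p.2) ''
        (({D : Finset V₁ | IsTotalDominatingSet T₁ D ∧ D.card = totalDominationNumber T₁}) ×ˢ
         ({D : Finset V₂ | IsTotalDominatingSet T₂ D ∧ D.card = totalDominationNumber T₂})) := by
    ext D
    simp only [Set.mem_setOf_eq, Set.mem_image, Set.mem_prod]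
    constructor
    · rintro ⟨hD, hcard⟩
      rw [key] at hD
      have h1 := hlow₁ _ hD.1
      have h2 := hlow₂ _ hD.2
      have h3 : D.toLeft.card + D.toRight.card = D.card := Finset.card_toLeft_add_card_toRight
      rw [hγ] at hcard
      exact ⟨(D.toLeft, D.toRight),
        ⟨⟨hD.1, show D.toLeft.card = totalDominationNumber T₁ by omega⟩,
         hD.2, show D.toRight.card = totalDominationNumber T₂ by omega⟩,
        Finset.toLeft_disjSum_toRight⟩
    · rintro ⟨⟨E₁, E₂⟩, ⟨⟨h1, h1c⟩, ⟨h2, h2c⟩⟩, rfl⟩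
      refine ⟨?_, by rw [Finset.card_disjSum, h1c, h2c, hγ]⟩
      rw [key]
      simp only [Finset.toLeft_disjSum, Finset.toRight_disjSum]
      exact ⟨h1, h2⟩
  have hinj : Function.Injective (fun p : Finset V₁ × Finset V₂ => p.1.disjSum p.2) := by
    intro p q h
    have h1 := congrArg Finset.toLeft h
    have h2 := congrArg Finset.toRight h
    simp only [Finset.toLeft_disjSum, Finset.toRight_disjSum] at h1 h2
    exact Prod.ext h1 h2
  rw [numMinTotalDomSets, numMinTotalDomSets, numMinTotalDomSets, himg,
    Set.ncard_image_of_injective _ hinj, ← Nat.card_coe_set_eq, ← Nat.card_coe_set_eq,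
    ← Nat.card_coe_set_eq, Nat.card_congr (Equiv.Set.prod _ _), Nat.card_prod]
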